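/- The Rudin–Shapiro sequence r (where r(n) counts modulo 2 the occurrences of the pattern '11' in the binary expansion of n) is not the fixed point of any uniform morphism. Specifically: for every k ≥ 1, r is not a fixed point of a 2^k-uniform morphism, because if it were, then r(2^k − 1) = r(2^(k+1) − 1), but the number of occurrences of '11' in the binary expansion of 2^(k+1) − 1 is exactly one more than in that of 2^k − 1, so r(2^(k+1) − 1) ≠ r(2^k − 1). -/

import Mathlib

/-- Number of occurrences of the pattern `11` in the binary expansion of `n`. -/
def occ11 (n : ℕ) : ℕ :=
  ((Finset.range n).filter (fun i => n.testBit i = true ∧ n.testBit (i + 1) = true)).card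

/-- The Rudin–Shapiro sequence. -/
def rudinShapiro (n : ℕ) : ℕ := occ11 n % 2

lemma occ11_two_pow_sub_one (k : ℕ) (hk : 1 ≤ k) : occ11 (2 ^ k - 1) = k - 1 := by
  unfold occ11
  have hfilt : ((Finset.range (2 ^ k - 1)).filter
      (fun i => (2 ^ k - 1).testBit i = true ∧ (2 ^ k - 1).testBit (i + 1) = true))
      = Finset.range (k - 1) := by
    ext i
    simp only [Finset.mem_filter, Finset.mem_range, Nat.testBit_two_pow_sub_one,
      decide_eq_true_eq]
    constructor
    · rintro ⟨_, _, h2⟩; omega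
    · intro h
      have hlt : k - 1 < 2 ^ k - 1 := by
        have := @Nat.lt_two_pow_self k
        omega
      exact ⟨by omega, by omega, by omega⟩
  rw [hfilt, Finset.card_range]

lemma rs_ne (k : ℕ) (hk : 1 ≤ k) :
    rudinShapiro (2 ^ k - 1) ≠ rudinShapiro (2 ^ (k + 1) - 1) := by
  unfold rudinShapiro
  rw [occ11_two_pow_sub_one k hk, occ11_two_pow_sub_one (k + 1) (by omega)]
  simp only [Nat.add_sub_cancel]
  omega

theorem rudinShapiro_not_fixed_point_of_uniform_morphism :
    ∀ k : ℕ, 1 ≤ k →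
      (¬ ∃ h : ℕ → List ℕ, (∀ a, (h a).length = 2 ^ k) ∧
        (∀ n, rudinShapiro n = (h (rudinShapiro (n / 2 ^ k))).getD (n % 2 ^ k) 0)) ∧
      rudinShapiro (2 ^ k - 1) ≠ rudinShapiro (2 ^ (k + 1) - 1) := by
  intro k hk
  refine ⟨?_, rs_ne k hk⟩
  rintro ⟨h, -, hfix⟩
  have hpos : 0 < 2 ^ k := Nat.pow_pos (n := k) (by norm_num)
  have h01 : 2 ^ k - 1 < 2 ^ k := by omega
  have e1 : rudinShapiro (2 ^ k - 1) = (h (rudinShapiro 0)).getD (2 ^ k - 1) 0 := by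
    have := hfix (2 ^ k - 1)
    rwa [Nat.div_eq_of_lt h01, Nat.mod_eq_of_lt h01] at this
  have e2 : rudinShapiro (2 ^ (k + 1) - 1) = (h (rudinShapiro 1)).getD (2 ^ k - 1) 0 := by
    have := hfix (2 ^ (k + 1) - 1)
    have hrep : 2 ^ (k + 1) - 1 = 2 ^ k + (2 ^ k - 1) := by
      have : 2 ^ (k + 1) = 2 * 2 ^ k := by ring
      omega
    have hdiv : (2 ^ (k + 1) - 1) / 2 ^ k = 1 := by
      rw [hrep, Nat.add_div_left _ hpos, Nat.div_eq_of_lt h01]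
    have hmod : (2 ^ (k + 1) - 1) % 2 ^ k = 2 ^ k - 1 := by
      rw [hrep, Nat.add_mod_left, Nat.mod_eq_of_lt h01]
    rwa [hdiv, hmod] at this
  have r0 : rudinShapiro 0 = 0 := by decide
  have r1 : rudinShapiro 1 = 0 := by decide
  rw [r0] at e1; rw [r1] at e2
  exact rs_ne k hk (e1.trans e2.symm)
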